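/- (Corollary: the norm splits over the even/odd decomposition.) Let x₊ ∈ evenOdd Q 0 and x₋ ∈ evenOdd Q 1 and x = x₊ + x₋. Then N(x) = N(x₊) + N(x₋); concretely, x • x* = x₊ * reverse(x₊) + x₋ * reverse(x₋). -/

import Mathlib

open CliffordAlgebra

/-- The diagonal quadratic form on `ℝ³` with weights `l`. -/
noncomputable def Qf (l : Fin 3 → ℝ) : QuadraticForm ℝ (Fin 3 → ℝ) :=
  QuadraticMap.weightedSumSquares ℝ l

/-- The octonionic product `x • y` of `x = x₊ + x₋` and `y = y₊ + y₋`, expressed in terms of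
the even/odd parts: `x • y = x₊y₊ - (reverse y₋)x₋ + y₋x₊ + x₋(reverse y₊)`. -/
noncomputable def octMul {R M : Type*} [CommRing R] [AddCommGroup M] [Module R M]
    (Q : QuadraticForm R M) (xp xm yp ym : CliffordAlgebra Q) : CliffordAlgebra Q :=
  xp * yp - reverse ym * xm + ym * xp + xm * reverse yp

/-- The octonionic norm `N(x) = x • x*`, where `x* = reverse x₊ - x₋` is the full grade
inversion of `x = x₊ + x₋`. -/
noncomputable def octNorm {R M : Type*} [CommRing R] [AddCommGroup M] [Module R M]
    (Q : QuadraticForm R M) (xp xm : CliffordAlgebra Q) : CliffordAlgebra Q :=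
  octMul Q xp xm (reverse xp) (-xm)

section aux
variable (l : Fin 3 → ℝ)

noncomputable def ee (i : Fin 3) : CliffordAlgebra (Qf l) := ι (Qf l) (Pi.single i 1)

lemma Qf_single (i : Fin 3) : Qf l (Pi.single i 1) = l i := by
  simp [Qf, Pi.single_apply]

lemma Qf_ortho {i j : Fin 3} (h : i ≠ j) :
    (Qf l).IsOrtho (Pi.single i 1) (Pi.single j 1) := by
  rw [QuadraticMap.isOrtho_def]
  fin_cases i <;> fin_cases j <;> simp_all [Qf, Fin.sum_univ_three, Pi.single_apply] <;> ring

lemma ee_sq (i : Fin 3) : ee l i * ee l i = algebraMap ℝ _ (l i) := by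
  rw [ee, ι_sq_scalar, Qf_single]

lemma ee_swap {i j : Fin 3} (h : i ≠ j) : ee l i * ee l j = -(ee l j * ee l i) :=
  ι_mul_ι_comm_of_isOrtho (Qf_ortho l h)

lemma ι_eq (v : Fin 3 → ℝ) :
    ι (Qf l) v = v 0 • ee l 0 + v 1 • ee l 1 + v 2 • ee l 2 := by
  have hv : v = Pi.single 0 (v 0) + Pi.single 1 (v 1) + Pi.single 2 (v 2) := by
    funext k; fin_cases k <;> simp [Pi.single_apply]
  conv_lhs => rw [hv]
  simp only [map_add]
  have h : ∀ i : Fin 3, (ι (Qf l)) (Pi.single i (v i)) = v i • ee l i := by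
    intro i
    rw [ee, ← map_smul]
    congr 1
    ext k
    simp [Pi.single_apply]
  rw [h 0, h 1, h 2]

-- tail-form rewrite lemmas for normalization
lemma ee_swap' {i j : Fin 3} (h : i ≠ j) (x : CliffordAlgebra (Qf l)) :
    ee l i * (ee l j * x) = -(ee l j * (ee l i * x)) := by
  rw [← mul_assoc, ee_swap l h, neg_mul, mul_assoc]

lemma ee_sq' (i : Fin 3) (x : CliffordAlgebra (Qf l)) :
    ee l i * (ee l i * x) = l i • x := by
  rw [← mul_assoc, ee_sq, Algebra.smul_def]

lemma ee_sq_smul (i : Fin 3) : ee l i * ee l i = l i • (1 : CliffordAlgebra (Qf l)) := by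
  rw [ee_sq, Algebra.algebraMap_eq_smul_one]

lemma reverse_ee (i : Fin 3) : reverse (ee l i) = ee l i := reverse_ι _

noncomputable def tt : CliffordAlgebra (Qf l) := ee l 0 * (ee l 1 * ee l 2)

noncomputable def FF : ((Fin 3 → ℝ) × ℝ) →ₗ[ℝ] CliffordAlgebra (Qf l) :=
  LinearMap.coprod (ι (Qf l)) (LinearMap.toSpanSingleton ℝ _ (tt l))

lemma mem_ee (i : Fin 3) : ee l i ∈ LinearMap.range (FF l) :=
  ⟨(Pi.single i 1, 0), by simp [FF, ee]⟩

lemma mem_tt : tt l ∈ LinearMap.range (FF l) :=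
  ⟨(0, 1), by simp [FF]⟩

end aux

section triple
variable (l : Fin 3 → ℝ)

lemma swap10 (x : CliffordAlgebra (Qf l)) : ee l 1 * (ee l 0 * x) = -(ee l 0 * (ee l 1 * x)) :=
  ee_swap' l (by decide) x
lemma swap20 (x : CliffordAlgebra (Qf l)) : ee l 2 * (ee l 0 * x) = -(ee l 0 * (ee l 2 * x)) :=
  ee_swap' l (by decide) x
lemma swap21 (x : CliffordAlgebra (Qf l)) : ee l 2 * (ee l 1 * x) = -(ee l 1 * (ee l 2 * x)) :=
  ee_swap' l (by decide) x
lemma swapt10 : ee l 1 * ee l 0 = -(ee l 0 * ee l 1) := ee_swap l (by decide)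
lemma swapt20 : ee l 2 * ee l 0 = -(ee l 0 * ee l 2) := ee_swap l (by decide)
lemma swapt21 : ee l 2 * ee l 1 = -(ee l 1 * ee l 2) := ee_swap l (by decide)

lemma fin_mk0 : (⟨0, by omega⟩ : Fin 3) = 0 := rfl
lemma fin_mk1 : (⟨1, by omega⟩ : Fin 3) = 1 := rfl
lemma fin_mk2 : (⟨2, by omega⟩ : Fin 3) = 2 := rfl

lemma triple_mem (i j k : Fin 3) :
    ee l i * ee l j * ee l k ∈ LinearMap.range (FF l) := by
  fin_cases i <;> fin_cases j <;> fin_cases k <;>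
    simp only [fin_mk0, fin_mk1, fin_mk2, mul_assoc, swap10, swap20, swap21, swapt10, swapt20, swapt21,
      ee_sq' , ee_sq_smul, mul_neg, neg_mul, neg_neg, mul_smul_comm, smul_mul_assoc, smul_smul, one_mul, mul_one, smul_neg] <;>
    solve_by_elim [Submodule.neg_mem, Submodule.smul_mem, mem_ee, mem_tt]

lemma pairt_mem (i j : Fin 3) :
    ee l i * ee l j * tt l ∈ LinearMap.range (FF l) := by
  fin_cases i <;> fin_cases j <;>
    simp only [tt, fin_mk0, fin_mk1, fin_mk2, mul_assoc, swap10, swap20, swap21, swapt10,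
      swapt20, swapt21, ee_sq' , ee_sq_smul, mul_neg, neg_mul, neg_neg, mul_smul_comm,
      smul_mul_assoc, smul_smul, one_mul, mul_one, smul_neg] <;>
    solve_by_elim [Submodule.neg_mem, Submodule.smul_mem, mem_ee, mem_tt]

lemma odd_mem (x : CliffordAlgebra (Qf l)) (hx : x ∈ evenOdd (Qf l) 1) :
    x ∈ LinearMap.range (FF l) := by
  refine odd_induction (Q := Qf l) (P := fun y _ => y ∈ LinearMap.range (FF l)) ?_ ?_ ?_ x hx
  · exact fun v => ⟨(v, 0), by simp [FF]⟩
  · exact fun x y hx hy ihx ihy => add_mem ihx ihy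
  · rintro m₁ m₂ x hx ⟨⟨v, r⟩, rfl⟩
    simp only [FF, LinearMap.coprod_apply, LinearMap.toSpanSingleton_apply]
    rw [ι_eq l m₁, ι_eq l m₂, ι_eq l v]
    simp only [add_mul, mul_add, smul_mul_assoc, mul_smul_comm, smul_smul]
    repeat'
      first
        | (with_reducible change ee l _ * ee l _ * ee l _ ∈ _); exact triple_mem l _ _ _
        | (with_reducible change ee l _ * ee l _ * tt l ∈ _); exact pairt_mem l _ _
        | apply Submodule.add_mem
        | apply Submodule.smul_mem

lemma reverse_tt : reverse (tt l) = -(tt l) := by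
  simp only [tt, reverse.map_mul, reverse_ee]
  simp only [mul_assoc, swap10, swap20, swap21, swapt10, swapt20, swapt21,
    ee_sq', ee_sq_smul, mul_neg, neg_mul, neg_neg]

lemma tt_comm_ee (i : Fin 3) : tt l * ee l i = ee l i * tt l := by
  fin_cases i <;>
    simp only [tt, fin_mk0, fin_mk1, fin_mk2, mul_assoc, swap10, swap20, swap21, swapt10,
      swapt20, swapt21, ee_sq' , ee_sq_smul, mul_neg, neg_mul, neg_neg, mul_smul_comm,
      smul_mul_assoc, smul_smul, one_mul, mul_one, smul_neg]

lemma tt_comm_ι (v : Fin 3 → ℝ) : tt l * ι (Qf l) v = ι (Qf l) v * tt l := by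
  rw [ι_eq]
  simp only [mul_add, add_mul, mul_smul_comm, smul_mul_assoc, tt_comm_ee]

lemma odd_comm (x : CliffordAlgebra (Qf l)) (hx : x ∈ evenOdd (Qf l) 1) :
    reverse x * x = x * reverse x := by
  obtain ⟨⟨v, r⟩, rfl⟩ := odd_mem l x hx
  simp only [FF, LinearMap.coprod_apply, LinearMap.toSpanSingleton_apply]
  rw [map_add, map_smul, reverse_ι, reverse_tt]
  have hc := tt_comm_ι l v
  simp only [smul_neg, mul_add, add_mul, smul_add, mul_neg, neg_mul, mul_smul_comm,
    smul_mul_assoc, smul_smul, hc]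
  abel

end triple


/-- (Corollary: the norm splits over the even/odd decomposition.) For `x = x₊ + x₋` with
`x₊` even and `x₋` odd, `N(x) = N(x₊) + N(x₋)`; concretely,
`x • x* = x₊ * reverse x₊ + x₋ * reverse x₋`. -/
theorem octNorm_even_add_odd (l : Fin 3 → ℝ) (hl : ∀ i, l i = 1 ∨ l i = -1)
    (xp xm : CliffordAlgebra (Qf l))
    (hxp : xp ∈ evenOdd (Qf l) 0) (hxm : xm ∈ evenOdd (Qf l) 1) :
    octNorm (Qf l) xp xm = octNorm (Qf l) xp 0 + octNorm (Qf l) 0 xm ∧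
    octNorm (Qf l) xp xm = xp * reverse xp + xm * reverse xm := by
  have hrev := odd_comm l xm hxm
  constructor <;>
  · simp only [octNorm, octMul, map_neg, map_zero, reverse_reverse, mul_zero, zero_mul,
      neg_mul, mul_neg, sub_zero, add_zero, zero_add, zero_sub, neg_neg, sub_neg_eq_add, hrev]
    abel
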